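/- Assume 0 ≤ r < 1 and 0 ≤ α̃ < 1, and define (near z = 1) the function W₁(z) = μ_b² z (1−α̃)(1−r) / ((1 − μ̄_b z − μ_b α̃ z)(1 − μ̄_b z − μ_b r z)). Then W₁ is differentiable at z = 1 and W₁'(1) = 1/(μ_b(1−r)) + (μ_b α̃ − μ_b + 1)/(μ_b(1−α̃)). -/

import Mathlib

/-- The PGF W₁(z) = μ_b² z (1−α̃)(1−r) / ((1 − μ̄_b z − μ_b α̃ z)(1 − μ̄_b z − μ_b r z)) of the
conditional sojourn time in a regular busy period is differentiable at z = 1 with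
W₁'(1) = 1/(μ_b(1−r)) + (μ_b α̃ − μ_b + 1)/(μ_b(1−α̃)). -/
theorem stmt_17
    (μb r al : ℝ) (hμb : μb ∈ Set.Ioo (0:ℝ) 1)
    (hr0 : 0 ≤ r) (hr1 : r < 1) (hal0 : 0 ≤ al) (hal1 : al < 1) :
    HasDerivAt (fun z : ℝ =>
        μb ^ 2 * z * (1 - al) * (1 - r) /
          ((1 - (1 - μb) * z - μb * al * z) * (1 - (1 - μb) * z - μb * r * z)))
      (1 / (μb * (1 - r)) + (μb * al - μb + 1) / (μb * (1 - al))) 1 := by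
  obtain ⟨hμ0, hμ1⟩ := hμb
  have hμ : μb ≠ 0 := ne_of_gt hμ0
  have hal : (1 : ℝ) - al ≠ 0 := by linarith
  have hrr : (1 : ℝ) - r ≠ 0 := by linarith
  have hd1 : 1 - (1 - μb) * 1 - μb * al * 1 = μb * (1 - al) := by ring
  have hd2 : 1 - (1 - μb) * 1 - μb * r * 1 = μb * (1 - r) := by ring
  have hden : (1 - (1 - μb) * 1 - μb * al * 1) * (1 - (1 - μb) * 1 - μb * r * 1) ≠ 0 := by
    rw [hd1, hd2]
    positivity
  have hnum : HasDerivAt (fun z : ℝ => μb ^ 2 * z * (1 - al) * (1 - r))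
      (μb ^ 2 * (1 - al) * (1 - r)) 1 := by
    simpa using (((hasDerivAt_id (1:ℝ)).const_mul (μb ^ 2)).mul_const (1 - al)).mul_const (1 - r)
  have hf1 : HasDerivAt (fun z : ℝ => 1 - (1 - μb) * z - μb * al * z)
      (-(1 - μb) - μb * al) 1 := by
    refine (((hasDerivAt_const (1:ℝ) (1:ℝ)).sub
      ((hasDerivAt_id (1:ℝ)).const_mul (1 - μb))).sub
      ((hasDerivAt_id (1:ℝ)).const_mul (μb * al))).congr_deriv ?_
    simp
  have hf2 : HasDerivAt (fun z : ℝ => 1 - (1 - μb) * z - μb * r * z)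
      (-(1 - μb) - μb * r) 1 := by
    refine (((hasDerivAt_const (1:ℝ) (1:ℝ)).sub
      ((hasDerivAt_id (1:ℝ)).const_mul (1 - μb))).sub
      ((hasDerivAt_id (1:ℝ)).const_mul (μb * r))).congr_deriv ?_
    simp
  have hD := hf1.mul hf2
  have h := hnum.div hD hden
  refine h.congr_deriv ?_
  simp only [Pi.mul_apply]
  rw [hd1, hd2]
  field_simp
  ring
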